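/- Let X be a tight-like space and let 𝓔 be the semilattice of all compact open up-sets of X (meet given by intersection, with ∅ as zero). Then the map φ : X → 𝓔̂_tight sending x to ξ_x = {V ∈ 𝓔 : x ∈ V} is well defined (each ξ_x is a tight filter on 𝓔) and is an order-homeomorphism from X onto the tight spectrum 𝓔̂_tight. In particular, every tight-like space is order-homeomorphic to the tight spectrum of a semilattice with zero. -/

import Mathlib

/-- A finite subset `C` is a cover for `f`: every `c ∈ C` satisfies `c ≤ f` and every
nonzero `g ≤ f` meets some `c ∈ C`. -/
def IsCover {E : Type*} [SemilatticeInf E] [OrderBot E] (C : Finset E) (f : E) : Prop :=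
  (∀ c ∈ C, c ≤ f) ∧ ∀ g : E, g ≠ ⊥ → g ≤ f → ∃ c ∈ C, g ⊓ c ≠ ⊥

/-- The (finite) family `{v i : i ∈ C}` is a cover for `f`. -/
def IsCoverFam {ι : Type*} {E : Type*} [SemilatticeInf E] [OrderBot E]
    (C : Finset ι) (v : ι → E) (f : E) : Prop :=
  (∀ i ∈ C, v i ≤ f) ∧ ∀ g : E, g ≠ ⊥ → g ≤ f → ∃ i ∈ C, g ⊓ v i ≠ ⊥

/-- A character on a semilattice with zero: a multiplicative `{0,1}`-valued map sending
`0` to `0` and not identically zero. -/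
def IsChar {E : Type*} [SemilatticeInf E] [OrderBot E] (φ : E → Bool) : Prop :=
  φ ⊥ = false ∧ (∀ e f : E, φ (e ⊓ f) = (φ e && φ f)) ∧ ∃ e : E, φ e = true

/-- A tight character: a character such that, for every `f` and every cover `C` for `f`,
`φ f = max_{c ∈ C} φ c`. -/
def IsTightChar {E : Type*} [SemilatticeInf E] [OrderBot E] (φ : E → Bool) : Prop :=
  IsChar φ ∧ ∀ f : E, ∀ C : Finset E, IsCover C f → (φ f = true ↔ ∃ c ∈ C, φ c = true)

/-- A filter on a semilattice with zero. -/
def IsFilterOn {E : Type*} [SemilatticeInf E] [OrderBot E] (ξ : Set E) : Prop :=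
  ξ.Nonempty ∧ ⊥ ∉ ξ ∧ (∀ e ∈ ξ, ∀ f ∈ ξ, e ⊓ f ∈ ξ) ∧ ∀ e ∈ ξ, ∀ f : E, e ≤ f → f ∈ ξ

/-- A tight filter: whenever `C` is a cover for some `f ∈ ξ`, some element of `C` lies in `ξ`. -/
def IsTightFilter {E : Type*} [SemilatticeInf E] [OrderBot E] (ξ : Set E) : Prop :=
  IsFilterOn ξ ∧ ∀ f ∈ ξ, ∀ C : Finset E, IsCover C f → ∃ c ∈ C, c ∈ ξ

/-- The tight order: `e` is tightly below `f` iff there is no nonzero `g ≤ e` with `g ⊓ f = ⊥`. -/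
def TightBelow {E : Type*} [SemilatticeInf E] [OrderBot E] (e f : E) : Prop :=
  ¬ ∃ g : E, g ≠ ⊥ ∧ g ≤ e ∧ g ⊓ f = ⊥

/-- Tight equivalence. -/
def TightEquiv {E : Type*} [SemilatticeInf E] [OrderBot E] (e f : E) : Prop :=
  TightBelow e f ∧ TightBelow f e

/-- A homomorphism is tightly injective if it reflects tight equivalence. -/
def TightlyInjective {E F : Type*} [SemilatticeInf E] [OrderBot E] [SemilatticeInf F] [OrderBot F]
    (h : E → F) : Prop :=
  ∀ e₁ e₂ : E, TightEquiv (h e₁) (h e₂) → TightEquiv e₁ e₂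

/-- A homomorphism is tightly surjective if its range is a large subset of the codomain:
for every `f` there is a finite `C ⊆ E` with `h e ≼ f` for all `e ∈ C` and
`{f ⊓ h e : e ∈ C}` a cover for `f`. -/
def TightlySurjective {E F : Type*} [SemilatticeInf E] [OrderBot E] [SemilatticeInf F] [OrderBot F]
    (h : E → F) : Prop :=
  ∀ f : F, ∃ C : Finset E, (∀ e ∈ C, TightBelow (h e) f) ∧ IsCoverFam C (fun e => f ⊓ h e) f

/-- A homomorphism of semilattices with zero is tight if it satisfies conditions
(4.1.ii) and (4.3.ii) of the paper. -/
def IsTightHom {E F : Type*} [SemilatticeInf E] [OrderBot E] [SemilatticeInf F] [OrderBot F]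
    (h : E → F) : Prop :=
  (∀ f : F, ∃ C : Finset E, IsCoverFam C (fun e => f ⊓ h e) f) ∧
  (∀ e : E, ∀ C : Finset E, IsCover C e → IsCoverFam C h (h e))

/-- A tight-like space: a locally compact Hausdorff space with a partial order such that
(a) every point lies in a compact open up-set, (b) whenever `¬ x ≤ y` there is a compact
open up-set containing `x` but not `y`, and (c) the maximal elements are dense. -/
structure IsTightLikeSpace (X : Type*) [TopologicalSpace X] [PartialOrder X] : Prop where
  locallyCompact : LocallyCompactSpace X
  t2 : T2Space X
  exists_mem_upSet : ∀ x : X, ∃ U : Set X, IsCompact U ∧ IsOpen U ∧ IsUpperSet U ∧ x ∈ U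
  separating : ∀ x y : X, ¬ x ≤ y →
    ∃ U : Set X, IsCompact U ∧ IsOpen U ∧ IsUpperSet U ∧ x ∈ U ∧ y ∉ U
  dense_maximal : Dense {x : X | IsMax x}

/-- The tight spectrum of a semilattice with zero, in the filter model: the set of all
tight filters, ordered by inclusion (the spectral order) and topologized via
characteristic functions as a subspace of the product `E → Bool` (`Bool` discrete). -/
structure TightFilters (E : Type*) [SemilatticeInf E] [OrderBot E] where
  carrier : Set E
  tight : IsTightFilter carrier

/-- The spectral order on tight filters: inclusion. -/
instance {E : Type*} [SemilatticeInf E] [OrderBot E] : PartialOrder (TightFilters E) :=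
  PartialOrder.lift TightFilters.carrier (fun a b h => by cases a; cases b; congr)

open Classical in
/-- The topology on tight filters, induced by characteristic functions from the product
topology on `E → Bool` (`Bool` discrete). -/
noncomputable instance {E : Type*} [SemilatticeInf E] [OrderBot E] :
    TopologicalSpace (TightFilters E) :=
  TopologicalSpace.induced
    (fun ξ : TightFilters E => (fun e => decide (e ∈ ξ.carrier) : E → Bool)) inferInstance

/-- The collection `𝓔` of compact open up-sets of `X`. -/
abbrev KUO (X : Type*) [TopologicalSpace X] [PartialOrder X] :=
  {U : Set X // IsCompact U ∧ IsOpen U ∧ IsUpperSet U}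

/-- `𝓔` is a meet-semilattice under intersection. -/
instance {X : Type*} [TopologicalSpace X] [PartialOrder X] [T2Space X] :
    SemilatticeInf (KUO X) :=
  { (inferInstance : PartialOrder (KUO X)) with
    inf := fun U V =>
      ⟨U.1 ∩ V.1, U.2.1.inter V.2.1, U.2.2.1.inter V.2.2.1, U.2.2.2.inter V.2.2.2⟩
    inf_le_left := fun _ _ => Set.inter_subset_left
    inf_le_right := fun _ _ => Set.inter_subset_right
    le_inf := fun _ _ _ h1 h2 => Set.subset_inter h1 h2 }

/-- The empty set is the zero of `𝓔`. -/
instance {X : Type*} [TopologicalSpace X] [PartialOrder X] : OrderBot (KUO X) :=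
  { bot := ⟨∅, isCompact_empty, isOpen_empty, isUpperSet_empty⟩
    bot_le := fun _ => Set.empty_subset _ }


open Classical

section Aux

variable {X : Type*} [TopologicalSpace X] [PartialOrder X] [T2Space X]

lemma KUO.ne_bot_iff {V : KUO X} : V ≠ ⊥ ↔ V.1.Nonempty := by
  rw [Set.nonempty_iff_ne_empty]
  constructor
  · intro h h'
    exact h (Subtype.ext h')
  · intro h h'
    exact h (by rw [h']; rfl)

/-- Finite intersection of a compact open up-set with a finite family of them, as an
element of `KUO X`. -/
def interKUO {ι : Type*} (U₀ : KUO X) (T : Finset ι) (A : ι → KUO X) : KUO X :=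
  ⟨U₀.1 ∩ ⋂ i ∈ T, (A i).1,
    U₀.2.1.of_isClosed_subset
      (U₀.2.1.isClosed.inter
        (isClosed_iInter fun i => isClosed_iInter fun _ => (A i).2.1.isClosed))
      Set.inter_subset_left,
    U₀.2.2.1.inter (isOpen_biInter_finset fun i _ => (A i).2.2.1),
    fun a b hab ha => ⟨U₀.2.2.2 hab ha.1,
      Set.mem_iInter₂.2 fun i hi => (A i).2.2.2 hab (Set.mem_iInter₂.1 ha.2 i hi)⟩⟩

lemma interKUO_val {ι : Type*} (U₀ : KUO X) (T : Finset ι) (A : ι → KUO X) :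
    (interKUO U₀ T A).1 = U₀.1 ∩ ⋂ i ∈ T, (A i).1 := rfl

lemma interKUO_mem {ι : Type*} [DecidableEq ι] {s : Set (KUO X)}
    (hinf : ∀ e ∈ s, ∀ f ∈ s, e ⊓ f ∈ s)
    (U₀ : KUO X) (hU₀ : U₀ ∈ s) (T : Finset ι) (A : ι → KUO X) (hA : ∀ i ∈ T, A i ∈ s) :
    interKUO U₀ T A ∈ s := by
  induction T using Finset.induction_on with
  | empty =>
      have : interKUO U₀ (∅ : Finset ι) A = U₀ := by
        apply Subtype.ext
        simp [interKUO_val]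
      rwa [this]
  | @insert a T ha ih =>
      have h1 : interKUO U₀ (insert a T) A = A a ⊓ interKUO U₀ T A := by
        apply Subtype.ext
        show U₀.1 ∩ ⋂ i ∈ insert a T, (A i).1 = (A a).1 ∩ (U₀.1 ∩ ⋂ i ∈ T, (A i).1)
        ext z
        simp only [Set.mem_inter_iff, Set.mem_iInter, Finset.mem_insert]
        constructor
        · rintro ⟨h, h2⟩
          exact ⟨h2 a (Or.inl rfl), h, fun i hi => h2 i (Or.inr hi)⟩
        · rintro ⟨h, h2, h3⟩
          refine ⟨h2, fun i hi => ?_⟩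
          rcases hi with rfl | hi
          · exact h
          · exact h3 i hi
      rw [h1]
      exact hinf _ (hA a (Finset.mem_insert_self a T)) _
        (ih fun i hi => hA i (Finset.mem_insert_of_mem hi))

/-- Key compactness separation: if every point of `U₀ \ W` avoids the closed set
containing `x` attached to it, then finitely many of these closed sets cut `U₀`
down into `W`. -/
lemma exists_finset_subset (x : X) (U₀ : KUO X) (hxU : x ∈ U₀.1) {W : Set X}
    (hW : IsOpen W)
    (A : X → Set X) (hAcl : ∀ y, IsClosed (A y)) (hAx : ∀ y, x ∈ A y)
    (hAy : ∀ y ∈ U₀.1 \ W, y ∉ A y) :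
    ∃ T : Finset X, x ∈ U₀.1 ∩ ⋂ y ∈ T, A y ∧ U₀.1 ∩ ⋂ y ∈ T, A y ⊆ W := by
  have hK : IsCompact (U₀.1 \ W) :=
    U₀.2.1.of_isClosed_subset (U₀.2.1.isClosed.sdiff hW) Set.diff_subset
  obtain ⟨T, hT⟩ := hK.elim_finite_subcover (fun y => (A y)ᶜ)
    (fun y => (hAcl y).isOpen_compl)
    (fun y hy => Set.mem_iUnion.2 ⟨y, hAy y hy⟩)
  refine ⟨T, ⟨hxU, Set.mem_iInter₂.2 fun y _ => hAx y⟩, fun z hz => ?_⟩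
  by_contra hzW
  obtain ⟨y, hyT, hy⟩ := Set.mem_iUnion₂.1 (hT ⟨hz.1, hzW⟩)
  exact hy (Set.mem_iInter₂.1 hz.2 y hyT)

/-- Maximal points have a neighbourhood basis of compact open up-sets. -/
lemma max_nbhd (hX : IsTightLikeSpace X) {m : X} (hm : IsMax m) {W : Set X}
    (hW : IsOpen W) (hmW : m ∈ W) : ∃ V : KUO X, m ∈ V.1 ∧ V.1 ⊆ W := by
  obtain ⟨U, hUc, hUo, hUu, hmU⟩ := hX.exists_mem_upSet m
  set U₀ : KUO X := ⟨U, hUc, hUo, hUu⟩ with hU₀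
  have hsep : ∀ y : X, ∃ V : KUO X, m ∈ V.1 ∧ (y ∈ U₀.1 \ W → y ∉ V.1) := by
    intro y
    by_cases h : m ≤ y
    · refine ⟨U₀, hmU, fun hy => absurd ?_ (absurd · hy.2)⟩
      have : y = m := le_antisymm (hm h) h
      rw [this]; exact hmW
    · obtain ⟨V, hc, ho, hu, hmV, hyV⟩ := hX.separating m y h
      exact ⟨⟨V, hc, ho, hu⟩, hmV, fun _ => hyV⟩
  choose Vm hVmx hVmy using hsep
  obtain ⟨T, hxT, hTW⟩ := exists_finset_subset m U₀ hmU hW (fun y => (Vm y).1)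
    (fun y => (Vm y).2.1.isClosed) hVmx hVmy
  exact ⟨interKUO U₀ T Vm, hxT, hTW⟩

/-- Each `ξ_x` is a tight filter. -/
lemma xi_tight (hX : IsTightLikeSpace X) (x : X) :
    IsTightFilter {V : KUO X | x ∈ V.1} := by
  constructor
  · refine ⟨?_, ?_, ?_, ?_⟩
    · obtain ⟨U, hc, ho, hu, hx⟩ := hX.exists_mem_upSet x
      exact ⟨⟨U, hc, ho, hu⟩, hx⟩
    · intro h
      exact h
    · exact fun e he f hf => ⟨he, hf⟩
    · exact fun e he f hef => hef he
  · intro f hf C hC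
    by_contra hcon
    push_neg at hcon
    have hScl : IsClosed (⋃ c ∈ C, c.1) :=
      C.finite_toSet.isClosed_biUnion fun c _ => c.2.1.isClosed
    have hSopen : IsOpen (f.1 \ ⋃ c ∈ C, c.1) := f.2.2.1.sdiff hScl
    have hxS : x ∈ f.1 \ ⋃ c ∈ C, c.1 := by
      refine ⟨hf, fun h => ?_⟩
      obtain ⟨c, hcC, hxc⟩ := Set.mem_iUnion₂.1 h
      exact hcon c hcC hxc
    obtain ⟨m, hmmax, hmS⟩ := hX.dense_maximal.exists_mem_open hSopen ⟨x, hxS⟩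
    obtain ⟨g, hmg, hgS⟩ := max_nbhd hX hmmax hSopen hmS
    have hgne : g ≠ ⊥ := KUO.ne_bot_iff.2 ⟨m, hmg⟩
    have hgf : g ≤ f := fun z hz => (hgS hz).1
    obtain ⟨c, hcC, hne⟩ := hC.2 g hgne hgf
    apply hne
    apply Subtype.ext
    apply Set.eq_empty_iff_forall_notMem.2
    intro z hz
    exact (hgS hz.1).2 (Set.mem_biUnion hcC hz.2)

/-- The order characterization. -/
lemma xi_le_iff (hX : IsTightLikeSpace X) (x y : X) :
    x ≤ y ↔ {V : KUO X | x ∈ V.1} ⊆ {V : KUO X | y ∈ V.1} := by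
  constructor
  · intro hxy V hV
    exact V.2.2.2 hxy hV
  · intro h
    by_contra hxy
    obtain ⟨U, hc, ho, hu, hxU, hyU⟩ := hX.separating x y hxy
    have hmem : (⟨U, hc, ho, hu⟩ : KUO X) ∈ {V : KUO X | x ∈ V.1} := hxU
    exact hyU (h hmem)

lemma TightFilters.ext' {E : Type*} [SemilatticeInf E] [OrderBot E]
    {a b : TightFilters E} (h : a.carrier = b.carrier) : a = b := by
  cases a; cases b; cases h; rfl

/-- Every tight filter is `ξ_x` for some (unique) `x`. -/
lemma xi_surj (hX : IsTightLikeSpace X) (ξ : TightFilters (KUO X)) :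
    ∃ x : X, ξ.carrier = {V : KUO X | x ∈ V.1} := by
  obtain ⟨⟨⟨f₀, hf₀⟩, hbot, hinf, hup⟩, htight⟩ := ξ.tight
  set s := ξ.carrier with hs
  have hne : ∀ V ∈ s, V.1.Nonempty := fun V hV =>
    KUO.ne_bot_iff.1 (fun h => hbot (h ▸ hV))
  haveI : Nonempty s := ⟨⟨f₀, hf₀⟩⟩
  set K : Set X := ⋂ V : s, (V : KUO X).1 with hKdef
  have hKcl : IsClosed K := isClosed_iInter fun V => (V : KUO X).2.1.isClosed
  have hKcomp : IsCompact K :=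
    f₀.2.1.of_isClosed_subset hKcl (Set.iInter_subset _ (⟨f₀, hf₀⟩ : s))
  have hKne : K.Nonempty := by
    apply IsCompact.nonempty_iInter_of_directed_nonempty_isCompact_isClosed
    · intro V W
      exact ⟨⟨(V : KUO X) ⊓ (W : KUO X), hinf _ V.2 _ W.2⟩,
        Set.inter_subset_left, Set.inter_subset_right⟩
    · exact fun V => hne _ V.2
    · exact fun V => (V : KUO X).2.1
    · exact fun V => (V : KUO X).2.1.isClosed
  -- find x ∈ K with ξ_x ⊆ s
  have hmain : ∃ x ∈ K, ∀ V : KUO X, x ∈ V.1 → V ∈ s := by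
    by_contra hcon
    push_neg at hcon
    have hD : ∀ x : X, ∃ V : KUO X, V ∉ s ∧ (x ∈ K → x ∈ V.1) := by
      intro x
      by_cases hx : x ∈ K
      · obtain ⟨V, hxV, hVs⟩ := hcon x hx
        exact ⟨V, hVs, fun _ => hxV⟩
      · exact ⟨⊥, hbot, fun h => absurd h hx⟩
    choose D hDs hDK using hD
    obtain ⟨T, hT⟩ := hKcomp.elim_finite_subcover (fun x => (D x).1)
      (fun x => (D x).2.2.1) (fun x hx => Set.mem_iUnion.2 ⟨x, hDK x hx⟩)
    obtain ⟨T', hT'⟩ := f₀.2.1.elim_finite_subfamily_closed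
      (fun V : s => (V : KUO X).1 ∩ (⋃ x ∈ T, (D x).1)ᶜ)
      (fun V => (V : KUO X).2.1.isClosed.inter
        (isOpen_biUnion fun x _ => (D x).2.2.1).isClosed_compl)
      (by
        apply Set.eq_empty_iff_forall_notMem.2
        intro z hz
        have hzK : z ∈ K := Set.mem_iInter.2 fun V => (Set.mem_iInter.1 hz.2 V).1
        have hzU : z ∉ ⋃ x ∈ T, (D x).1 := (Set.mem_iInter.1 hz.2 ⟨f₀, hf₀⟩).2
        exact hzU (hT hzK))
    set f : KUO X := interKUO f₀ T' (fun V => (V : KUO X)) with hfdef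
    have hfs : f ∈ s := interKUO_mem hinf f₀ hf₀ T' _ (fun V _ => V.2)
    have hfU : f.1 ⊆ ⋃ x ∈ T, (D x).1 := by
      intro z hz
      by_contra hzU
      have : z ∈ f₀.1 ∩ ⋂ V ∈ T', ((V : KUO X).1 ∩ (⋃ x ∈ T, (D x).1)ᶜ) :=
        ⟨hz.1, Set.mem_iInter₂.2 fun V hV => ⟨Set.mem_iInter₂.1 hz.2 V hV, hzU⟩⟩
      rw [hT'] at this
      exact this
    have hcover : IsCover (T.image fun x => f ⊓ D x) f := by
      constructor
      · intro c hc
        obtain ⟨x, _, rfl⟩ := Finset.mem_image.1 hc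
        exact inf_le_left
      · intro g hg hgf
        obtain ⟨z, hz⟩ := KUO.ne_bot_iff.1 hg
        obtain ⟨x, hxT, hzD⟩ := Set.mem_iUnion₂.1 (hfU (hgf hz))
        refine ⟨f ⊓ D x, Finset.mem_image.2 ⟨x, hxT, rfl⟩, ?_⟩
        apply KUO.ne_bot_iff.2
        exact ⟨z, hz, hgf hz, hzD⟩
    obtain ⟨c, hcC, hcs⟩ := htight f hfs _ hcover
    obtain ⟨x, hxT, rfl⟩ := Finset.mem_image.1 hcC
    exact hDs x (hup _ hcs (D x) inf_le_right)
  obtain ⟨x, hxK, hxs⟩ := hmain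
  refine ⟨x, Set.Subset.antisymm ?_ ?_⟩
  · intro V hV
    exact Set.mem_iInter.1 hxK ⟨V, hV⟩
  · intro V hV
    exact hxs V hV

lemma cont_decide {s : Set X} (hscl : IsClosed s) (hso : IsOpen s)
    (d : ∀ x, Decidable (x ∈ s)) :
    Continuous fun x => @decide (x ∈ s) (d x) := by
  rw [continuous_def]
  intro t _
  by_cases ht : true ∈ t <;> by_cases hf : false ∈ t
  · have : (fun x => @decide (x ∈ s) (d x)) ⁻¹' t = Set.univ := by
      ext x
      by_cases hx : x ∈ s <;> simp [Set.mem_preimage, decide_eq_true hx,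
        decide_eq_false, hx, ht, hf]
    rw [this]; exact isOpen_univ
  · have : (fun x => @decide (x ∈ s) (d x)) ⁻¹' t = s := by
      ext x
      by_cases hx : x ∈ s <;> simp [Set.mem_preimage, decide_eq_true,
        decide_eq_false, hx, ht, hf]
    rw [this]; exact hso
  · have : (fun x => @decide (x ∈ s) (d x)) ⁻¹' t = sᶜ := by
      ext x
      by_cases hx : x ∈ s <;> simp [Set.mem_preimage, decide_eq_true,
        decide_eq_false, hx, ht, hf]
    rw [this]; exact hscl.isOpen_compl
  · have : (fun x => @decide (x ∈ s) (d x)) ⁻¹' t = ∅ := by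
      ext x
      by_cases hx : x ∈ s <;> simp [Set.mem_preimage, decide_eq_true,
        decide_eq_false, hx, ht, hf]
    rw [this]; exact isOpen_empty

end Aux

/-- Let `X` be a tight-like space and `𝓔 = KUO X` its semilattice of
compact open up-sets. Then `x ↦ ξ_x = {V ∈ 𝓔 : x ∈ V}` is well defined (each `ξ_x` is a
tight filter on `𝓔`) and is an order-homeomorphism from `X` onto the tight spectrum of
`𝓔`. In particular, every tight-like space is order-homeomorphic to the tight spectrum
of a semilattice with zero. -/
theorem tightLike_orderHomeo_tightSpectrum {X : Type*} [TopologicalSpace X]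
    [PartialOrder X] [T2Space X] (hX : IsTightLikeSpace X) :
    (∀ x : X, IsTightFilter {V : KUO X | x ∈ V.1}) ∧
    ∃ hmap : ∀ x : X, IsTightFilter {V : KUO X | x ∈ V.1},
      IsHomeomorph (fun x : X =>
        (⟨{V : KUO X | x ∈ V.1}, hmap x⟩ : TightFilters (KUO X))) ∧
      ∀ x y : X, x ≤ y ↔
        (⟨{V : KUO X | x ∈ V.1}, hmap x⟩ : TightFilters (KUO X)) ≤
          ⟨{V : KUO X | y ∈ V.1}, hmap y⟩ := by
  refine ⟨xi_tight hX, xi_tight hX, ⟨?_, ?_, ?_⟩, fun x y => xi_le_iff hX x y⟩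
  · -- Continuity
    apply continuous_induced_rng.2
    apply continuous_pi
    intro e
    exact cont_decide e.2.1.isClosed e.2.2.1 _
  · -- Open map
    intro W hW
    rw [isOpen_iff_forall_mem_open]
    rintro ξ ⟨x, hxW, rfl⟩
    obtain ⟨U, hUc, hUo, hUu, hxU⟩ := hX.exists_mem_upSet x
    set U₀ : KUO X := ⟨U, hUc, hUo, hUu⟩ with hU₀def
    have hsep : ∀ y : X, ∃ (B : KUO X) (b : Bool), (x ∈ B.1 ↔ b = true) ∧
        (y ∈ U₀.1 \ W → ¬(y ∈ B.1 ↔ b = true)) := by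
      intro y
      by_cases hxy : x ≤ y
      · by_cases hyx : y ≤ x
        · refine ⟨U₀, true, by simpa using hxU, fun hy => absurd ?_ (fun h => hy.2 h)⟩
          have hyeq : y = x := le_antisymm hyx hxy
          rw [hyeq]; exact hxW
        · obtain ⟨V, hc, ho, hu, hyV, hxV⟩ := hX.separating y x hyx
          exact ⟨⟨V, hc, ho, hu⟩, false, by simp [hxV], fun _ h => by cases h.1 hyV⟩
      · obtain ⟨V, hc, ho, hu, hxV, hyV⟩ := hX.separating x y hxy
        exact ⟨⟨V, hc, ho, hu⟩, true, by simp [hxV], fun _ h => hyV (h.2 rfl)⟩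
    choose B sb hBx hBy using hsep
    have hAcl : ∀ y, IsClosed {z : X | z ∈ (B y).1 ↔ sb y = true} := by
      intro y
      rcases Bool.eq_false_or_eq_true (sb y) with hsb | hsb <;> rw [hsb]
      · have h : {z : X | z ∈ (B y).1 ↔ true = true} = (B y).1 := by
          ext z; simp
        rw [h]; exact (B y).2.1.isClosed
      · have h : {z : X | z ∈ (B y).1 ↔ false = true} = ((B y).1)ᶜ := by
          ext z; simp
        rw [h]; exact (B y).2.2.1.isClosed_compl
    obtain ⟨T, hxS, hSW⟩ := exists_finset_subset x U₀ hxU hW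
      (fun y => {z : X | z ∈ (B y).1 ↔ sb y = true}) hAcl (fun y => hBx y) hBy
    refine ⟨{η : TightFilters (KUO X) | U₀ ∈ η.carrier ∧
        ∀ y ∈ T, decide ((B y) ∈ η.carrier) = sb y}, ?_, ?_, ?_⟩
    · rintro η ⟨h1, h2⟩
      obtain ⟨z, hz⟩ := xi_surj hX η
      have hzU : z ∈ U₀.1 := by rw [hz] at h1; exact h1
      refine ⟨z, hSW ⟨hzU, Set.mem_iInter₂.2 fun y hy => ?_⟩, (TightFilters.ext' hz).symm⟩
      have h3 := h2 y hy
      rw [hz] at h3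
      constructor
      · intro hzB
        rw [← h3]
        exact decide_eq_true hzB
      · intro hb
        exact of_decide_eq_true (h3.trans hb)
    · have hχ : Continuous (fun η : TightFilters (KUO X) =>
          (fun e : KUO X => decide (e ∈ η.carrier))) := continuous_induced_dom
      have heq : {η : TightFilters (KUO X) | U₀ ∈ η.carrier ∧
          ∀ y ∈ T, decide ((B y) ∈ η.carrier) = sb y} =
          (fun η : TightFilters (KUO X) => (fun e : KUO X => decide (e ∈ η.carrier))) ⁻¹'
          ({g : KUO X → Bool | g U₀ = true} ∩
            ⋂ y ∈ T, {g : KUO X → Bool | g (B y) = sb y}) := by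
        ext η
        simp only [Set.mem_setOf_eq, Set.mem_preimage, Set.mem_inter_iff, Set.mem_iInter,
          decide_eq_true_eq]
      rw [heq]
      apply hχ.isOpen_preimage
      apply IsOpen.inter
      · exact (isOpen_discrete ({true} : Set Bool)).preimage (continuous_apply (A := fun _ : KUO X => Bool) U₀)
      · apply isOpen_biInter_finset
        intro y _
        exact (isOpen_discrete ({sb y} : Set Bool)).preimage (continuous_apply (A := fun _ : KUO X => Bool) (B y))
    · refine ⟨hxU, fun y _ => ?_⟩
      cases hsb : sb y
      · exact decide_eq_false fun h => by rw [(hBx y).1 h] at hsb; cases hsb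
      · exact decide_eq_true ((hBx y).2 hsb)
  · -- Bijective
    constructor
    · intro a b hab
      have h1 : {V : KUO X | a ∈ V.1} = {V : KUO X | b ∈ V.1} :=
        congrArg TightFilters.carrier hab
      exact le_antisymm ((xi_le_iff hX a b).2 h1.le) ((xi_le_iff hX b a).2 h1.ge)
    · intro ξ
      obtain ⟨x, hx⟩ := xi_surj hX ξ
      exact ⟨x, (TightFilters.ext' hx).symm⟩
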